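/- If T is a tree with distinguishing number D(T) = D ≥ 3 and order n, then F(T) ≤ ((D-1)/(D+1))·n. -/

import Mathlib

open SimpleGraph


/-- A set `S` of vertices is a fixing set of `G` if the only automorphism of `G`
fixing every vertex of `S` is the identity. -/
def IsFixingSet {V : Type*} (G : SimpleGraph V) (S : Set V) : Prop :=
  ∀ φ : G ≃g G, (∀ v ∈ S, φ v = v) → ∀ v, φ v = v

/-- The fixing number of a finite graph: the minimum cardinality of a fixing set. -/
noncomputable def fixingNumber {V : Type*} [Fintype V] (G : SimpleGraph V) : ℕ :=
  sInf {n | ∃ S : Finset V, S.card = n ∧ IsFixingSet G ↑S}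

/-- A coloring is distinguishing if the only color-preserving automorphism is the identity. -/
def IsDistinguishingColoring {V α : Type*} (G : SimpleGraph V) (c : V → α) : Prop :=
  ∀ φ : G ≃g G, (∀ v, c (φ v) = c v) → ∀ v, φ v = v

/-- `G` is `D`-distinguishable if it has a distinguishing coloring with at most `D` colors. -/
def Distinguishable {V : Type*} (G : SimpleGraph V) (D : ℕ) : Prop :=
  ∃ c : V → Fin D, IsDistinguishingColoring G c

/-- The distinguishing number of `G`. -/
noncomputable def distinguishingNumber {V : Type*} (G : SimpleGraph V) : ℕ :=
  sInf {D | Distinguishable G D}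

/-- Eccentricity of a vertex: the supremum of distances to other vertices. -/
noncomputable def ecc {V : Type*} (G : SimpleGraph V) (v : V) : ℕ :=
  sSup (Set.range (G.dist v))

namespace TreeFix

variable {V : Type*} (G : SimpleGraph V)

/-- The graph `G` with vertex `r` "removed" (left isolated). -/
def Gm (r : V) : SimpleGraph V where
  Adj x y := G.Adj x y ∧ x ≠ r ∧ y ≠ r
  symm := ⟨fun x y ⟨h, hx, hy⟩ => ⟨h.symm, hy, hx⟩⟩
  loopless := ⟨fun x ⟨h, _, _⟩ => G.irrefl h⟩

lemma gm_le (r : V) : Gm G r ≤ G := fun _ _ h => h.1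

/-- The branch of `u` away from `r` : the connected component of `u` in `G - r`. -/
def B (r u : V) : Set V := {v | (Gm G r).Reachable u v}

variable {G}

lemma mem_B_self (r u : V) : u ∈ B G r u := Reachable.refl u

lemma B_eq_of_mem {r u v : V} (h : v ∈ B G r u) : B G r v = B G r u := by
  ext w
  exact ⟨fun hw => h.trans hw, fun hw => h.symm.trans hw⟩

lemma mem_B_symm {r u v : V} (h : v ∈ B G r u) : u ∈ B G r v :=
  Reachable.symm h

lemma ne_of_mem_B {r u v : V} (hu : u ≠ r) (h : v ∈ B G r u) : v ≠ r := by
  obtain ⟨w⟩ := h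
  induction w with
  | nil => exact hu
  | cons h p ih => exact ih h.2.2

lemma not_mem_B {r u : V} (hu : u ≠ r) : r ∉ B G r u :=
  fun h => (ne_of_mem_B hu h) rfl

/-- A `G`-walk avoiding `r` gives reachability in `Gm G r`. -/
lemma reachable_of_walk_avoid {r u v : V} (p : G.Walk u v) (hr : r ∉ p.support) :
    (Gm G r).Reachable u v := by
  induction p with
  | nil => exact Reachable.refl _
  | @cons a b c h p ih =>
    have ha : a ≠ r := fun e => hr (by simp [e])
    have hb : b ≠ r := fun e => hr (by simp [e.symm, Walk.start_mem_support])
    have hr' : r ∉ p.support := fun e => hr (by simp [e])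
    exact (Reachable.refl a).trans
      ((Adj.reachable (G := Gm G r) ⟨h, ha, hb⟩).trans (ih hr'))

/-- Conversely a walk in `Gm G r` from `u ≠ r` gives a `G`-walk avoiding `r`. -/
lemma exists_walk_avoid_of_reachable {r u v : V} (hu : u ≠ r) (h : v ∈ B G r u) :
    ∃ p : G.Walk u v, r ∉ p.support := by
  obtain ⟨w⟩ := h
  induction w with
  | nil => exact ⟨Walk.nil, by simpa using fun e => hu e.symm⟩
  | @cons a b c h p ih =>
    obtain ⟨q, hq⟩ := ih h.2.2
    exact ⟨Walk.cons h.1 q, by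
      simp only [Walk.support_cons, List.mem_cons]
      rintro (rfl | hh)
      · exact hu rfl
      · exact hq hh⟩


section Tree

variable (hT : G.IsTree)
include hT

/-- Every vertex `v ≠ r` lies in the branch of some neighbor of `r`. -/
lemma exists_branch {r v : V} (hv : v ≠ r) :
    ∃ u, G.Adj r u ∧ v ∈ B G r u := by
  obtain ⟨p⟩ := hT.isConnected.1 v r
  induction p with
  | nil => exact absurd rfl hv
  | @cons a b c h p ih =>
    rcases eq_or_ne b c with rfl | hbc
    · exact ⟨a, h.symm, mem_B_self _ _⟩
    · obtain ⟨u, hu, hmem⟩ := ih hbc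
      refine ⟨u, hu, hmem.trans (Adj.reachable ?_)⟩
      exact Adj.symm (G := Gm G c) ⟨h, hv, hbc⟩

/-- In a tree, a branch at `r` contains at most one neighbor of `r`. -/
lemma eq_of_adj_mem_B {r u u' : V} (hu : G.Adj r u) (hu' : G.Adj r u')
    (h : u' ∈ B G r u) : u' = u := by
  classical
  by_contra hne
  obtain ⟨q, hq⟩ := exists_walk_avoid_of_reachable hu.ne' h
  have hp1 : (q.toPath : G.Walk u u').IsPath := (q.toPath).2
  have hr1 : r ∉ (q.toPath : G.Walk u u').support :=
    fun hh => hq (Walk.support_toPath_subset q hh)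
  have hp2 : (Walk.cons hu.symm (Walk.cons hu' Walk.nil) : G.Walk u u').IsPath := by
    simp only [Walk.isPath_def, Walk.support_cons, Walk.support_nil,
      List.nodup_cons, List.mem_cons, List.mem_singleton, List.not_mem_nil,
      not_false_iff, List.nodup_nil, and_true]
    refine ⟨?_, ?_⟩
    · push_neg
      exact ⟨fun e => hu.ne e.symm, fun e => hne e.symm, trivial⟩
    · rintro (e | e)
      · exact hu'.ne e
      · exact e
  have := (hT.existsUnique_path u u').unique hp1 hp2
  rw [this] at hr1
  simp at hr1

omit hT in
/-- Membership of support vertices of an avoiding walk. -/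
lemma mem_B_of_mem_support {r u v y : V} (q : G.Walk u v) (hq : r ∉ q.support)
    (hy : y ∈ q.support) : y ∈ B G r u := by
  classical
  exact reachable_of_walk_avoid (q.takeUntil y hy)
    (fun hh => hq (Walk.support_takeUntil_subset q hy hh))

lemma branch_subset {p r x : V} (hpr : G.Adj p r) (hrx : G.Adj r x) (hxp : x ≠ p) :
    B G r x ⊆ B G p r := by
  intro v hv
  obtain ⟨q, hq⟩ := exists_walk_avoid_of_reachable hrx.ne' hv
  have hp : p ∉ q.support := by
    intro hp
    exact hxp (eq_of_adj_mem_B hT hrx hpr.symm (mem_B_of_mem_support q hq hp)).symm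
  refine reachable_of_walk_avoid (Walk.cons hrx q) ?_
  simp only [Walk.support_cons, List.mem_cons]
  rintro (e | e)
  · exact hpr.ne e
  · exact hp e

/-- branches at `r` of distinct neighbors are disjoint. -/
lemma branch_disjoint {r x y : V} (hx : G.Adj r x) (hy : G.Adj r y) (hxy : x ≠ y) :
    B G r x ∩ B G r y = ∅ := by
  ext v
  simp only [Set.mem_inter_iff, Set.mem_empty_iff_false, iff_false, not_and]
  intro hvx hvy
  exact hxy (eq_of_adj_mem_B hT hx hy (hvx.trans hvy.symm)).symm

omit hT in
lemma not_mem_support_takeUntil_of_isPath {v w a : V} {p : G.Walk v w} (hp : p.IsPath)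
    (h : a ∈ p.support) (hw : a ≠ w) [DecidableEq V] :
    w ∉ (p.takeUntil a h).support := by
  intro hws
  have hd := hp.support_nodup
  have hsupp : p.support = (p.takeUntil a h).support ++ (p.dropUntil a h).support.tail := by
    conv_lhs => rw [← p.take_spec h]
    rw [Walk.support_append]
  rw [hsupp] at hd
  have hwd : w ∈ (p.dropUntil a h).support := Walk.end_mem_support _
  rw [Walk.support_eq_cons] at hwd
  rcases List.mem_cons.1 hwd with e | hwt
  · exact hw e.symm
  · exact (List.disjoint_of_nodup_append hd) hws hwt

/-- Every vertex is in the branch of `b` away from `a` or of `a` away from `b`. -/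
lemma pair_cover {a b : V} (hab : a ≠ b) (v : V) :
    v ∈ B G a b ∨ v ∈ B G b a := by
  classical
  obtain ⟨p0⟩ := hT.isConnected.1 v b
  set p := p0.toPath.1 with hpdef
  have hp : p.IsPath := p0.toPath.2
  by_cases ha : a ∈ p.support
  · right
    have hq : (p.takeUntil a ha).IsPath := hp.takeUntil ha
    have hbq : b ∉ (p.takeUntil a ha).support :=
      not_mem_support_takeUntil_of_isPath hp ha hab
    exact (reachable_of_walk_avoid _ hbq).symm
  · left
    exact (reachable_of_walk_avoid p ha).symm

/-- For adjacent `a b` the two branches are disjoint. -/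
lemma pair_disjoint {a b : V} (hab : G.Adj a b) :
    B G a b ∩ B G b a = ∅ := by
  classical
  ext v
  simp only [Set.mem_inter_iff, Set.mem_empty_iff_false, iff_false, not_and]
  intro h1 h2
  -- h1 : Reachable b v in Gm a, h2 : Reachable a v in Gm b
  obtain ⟨q1, hq1⟩ := exists_walk_avoid_of_reachable hab.ne' h1
  obtain ⟨q2, hq2⟩ := exists_walk_avoid_of_reachable hab.ne h2
  -- path from v to b avoiding a:
  have hrev1 : a ∉ q1.reverse.support := by rwa [Walk.support_reverse, List.mem_reverse]
  have hrev2 : b ∉ q2.reverse.support := by rwa [Walk.support_reverse, List.mem_reverse]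
  set p1 := q1.reverse.toPath.1 with hp1def
  have hp1 : p1.IsPath := q1.reverse.toPath.2
  have ha1 : a ∉ p1.support := fun hh => hrev1 (Walk.support_toPath_subset _ hh)
  set p2 := q2.reverse.toPath.1 with hp2def
  have hp2 : p2.IsPath := q2.reverse.toPath.2
  have hb2 : b ∉ p2.support := fun hh => hrev2 (Walk.support_toPath_subset _ hh)
  -- b –(edge)– a –(p2.reverse)– v : walk b → v through a
  have hb2' : b ∉ p2.reverse.support := by
    rwa [Walk.support_reverse, List.mem_reverse]
  have hp3 : (Walk.cons hab.symm p2.reverse).IsPath :=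
    (hp2.reverse).cons hb2'
  have hrev : p1.reverse.IsPath := hp1.reverse
  have := (hT.existsUnique_path b v).unique hp3 hrev
  have haa : a ∈ p1.reverse.support := by
    rw [← this]
    simp [Walk.support_cons]
  rw [Walk.support_reverse, List.mem_reverse] at haa
  exact ha1 haa

/-- For non-adjacent distinct `a b` the two branches overlap. -/
lemma pair_overlap {a b : V} (hab : a ≠ b) (hnadj : ¬ G.Adj a b) :
    ∃ m, m ∈ B G a b ∧ m ∈ B G b a := by
  classical
  obtain ⟨p0⟩ := hT.isConnected.1 a b
  obtain ⟨p, hp⟩ : ∃ p : G.Walk a b, p.IsPath := ⟨p0.toPath.1, p0.toPath.2⟩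
  cases p with
  | nil => exact absurd rfl hab
  | @cons _ m _ hadj q =>
    have hq : q.IsPath ∧ a ∉ q.support := by
      rw [Walk.cons_isPath_iff] at hp; exact hp
    have hmb : m ≠ b := by
      intro e; subst e; exact hnadj hadj
    refine ⟨m, ?_, ?_⟩
    · exact (reachable_of_walk_avoid q hq.2).symm
    · exact Adj.reachable ⟨hadj, hab, hmb⟩

end Tree

section Auto

lemma mem_B_map (φ : G ≃g G) {r u v : V} (h : v ∈ B G r u) :
    φ v ∈ B G (φ r) (φ u) := by
  refine Reachable.map (G := Gm G r) (G' := Gm G (φ r))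
    ⟨φ.toEquiv.toEmbedding.toFun, ?_⟩ h
  rintro a b ⟨hadj, ha, hb⟩
  exact ⟨φ.map_rel_iff.2 hadj, fun e => ha (φ.injective e), fun e => hb (φ.injective e)⟩

lemma mem_B_map_iff (φ : G ≃g G) {r u v : V} :
    φ v ∈ B G (φ r) (φ u) ↔ v ∈ B G r u := by
  refine ⟨fun h => ?_, mem_B_map φ⟩
  have := mem_B_map φ.symm h
  simpa using this

end Auto

section Finsets

variable (G) [Fintype V] [DecidableEq V]

noncomputable def Bf (r u : V) : Finset V := (Set.toFinite (B G r u)).toFinset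

variable {G}

@[simp] lemma mem_Bf {r u v : V} : v ∈ Bf G r u ↔ v ∈ B G r u :=
  Set.Finite.mem_toFinset _

lemma Bf_card_map (φ : G ≃g G) (r u : V) :
    (Bf G (φ r) (φ u)).card = (Bf G r u).card := by
  have himg : Bf G (φ r) (φ u) = (Bf G r u).image φ := by
    ext w
    simp only [mem_Bf, Finset.mem_image]
    constructor
    · intro hw
      refine ⟨φ.symm w, ?_, by simp⟩
      have := mem_B_map φ.symm hw
      simpa using this
    · rintro ⟨y, hy, rfl⟩
      exact mem_B_map φ hy
  rw [himg, Finset.card_image_of_injective _ φ.injective]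

lemma card_partition (hT : G.IsTree) {r : V} {X : Finset V}
    (hX : ∀ x ∈ X, G.Adj r x) {W : Finset V} (hrW : r ∈ W)
    (hcov : ∀ v ∈ W, v ≠ r → ∃ x ∈ X, v ∈ B G r x)
    (hsub : ∀ x ∈ X, ∀ v ∈ B G r x, v ∈ W) :
    W.card = 1 + ∑ x ∈ X, (Bf G r x).card := by
  have hW : W = insert r (X.biUnion (fun x => Bf G r x)) := by
    ext v
    simp only [Finset.mem_insert, Finset.mem_biUnion, mem_Bf]
    constructor
    · intro hv
      rcases eq_or_ne v r with rfl | hvr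
      · exact Or.inl rfl
      · exact Or.inr (hcov v hv hvr)
    · rintro (rfl | ⟨x, hx, hvx⟩)
      · exact hrW
      · exact hsub x hx v hvx
  have hdisj : ∀ x ∈ X, ∀ y ∈ X, x ≠ y →
      Disjoint (Bf G r x) (Bf G r y) := by
    intro x hx y hy hxy
    simp only [Finset.disjoint_left, mem_Bf]
    intro v hv hv'
    have := branch_disjoint hT (hX x hx) (hX y hy) hxy
    exact absurd (Set.mem_inter hv hv') (by rw [this]; exact Set.notMem_empty v)
  have hnot : r ∉ X.biUnion (fun x => Bf G r x) := by
    simp only [Finset.mem_biUnion, mem_Bf, not_exists]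
    intro x hx
    exact not_mem_B (hX x hx.1).ne' hx.2
  rw [hW, Finset.card_insert_of_notMem hnot, Finset.card_biUnion hdisj, Nat.add_comm]

end Finsets

section Leaf

variable {r x x' : V}

lemma adj_eq_of_B_singleton (hrx : G.Adj r x) (hB : B G r x = {x})
    {y : V} (hy : G.Adj x y) : y = r := by
  by_contra hyr
  have : y ∈ B G r x := Adj.reachable ⟨hy, hrx.ne', hyr⟩
  rw [hB] at this
  exact hy.ne' this

lemma swap_is_auto [DecidableEq V] (hxx : x ≠ x') (hrx : G.Adj r x) (hrx' : G.Adj r x')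
    (hx : ∀ y, G.Adj x y → y = r) (hx' : ∀ y, G.Adj x' y → y = r) :
    ∃ φ : G ≃g G, ⇑φ = ⇑(Equiv.swap x x') := by
  have key : ∀ a b, G.Adj a b → G.Adj (Equiv.swap x x' a) (Equiv.swap x x' b) := by
    intro a b hab
    rcases eq_or_ne a x with rfl | hax
    · have hbr : b = r := hx b hab
      subst hbr
      rw [Equiv.swap_apply_left, Equiv.swap_apply_of_ne_of_ne hrx.ne hrx'.ne]
      exact hrx'.symm
    rcases eq_or_ne a x' with rfl | hax'
    · have hbr : b = r := hx' b hab
      subst hbr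
      rw [Equiv.swap_apply_right, Equiv.swap_apply_of_ne_of_ne hrx.ne hrx'.ne]
      exact hrx.symm
    rcases eq_or_ne b x with rfl | hbx
    · have har : a = r := hx a hab.symm
      subst har
      rw [Equiv.swap_apply_left, Equiv.swap_apply_of_ne_of_ne hrx.ne hrx'.ne]
      exact hrx'
    rcases eq_or_ne b x' with rfl | hbx'
    · have har : a = r := hx' a hab.symm
      subst har
      rw [Equiv.swap_apply_right, Equiv.swap_apply_of_ne_of_ne hrx.ne hrx'.ne]
      exact hrx
    rw [Equiv.swap_apply_of_ne_of_ne hax hax', Equiv.swap_apply_of_ne_of_ne hbx hbx']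
    exact hab
  refine ⟨⟨Equiv.swap x x', ?_⟩, rfl⟩
  intro a b
  constructor
  · intro h
    have := key _ _ h
    simpa using this
  · exact key a b

end Leaf

section Step

variable [Fintype V] [DecidableEq V] {D : ℕ} {c : V → Fin D}

lemma leaf_card_le (hT : G.IsTree) (hc : IsDistinguishingColoring G c)
    {r : V} {L : Finset V} (hL : ∀ x ∈ L, G.Adj r x ∧ B G r x = {x}) :
    L.card ≤ D := by
  have hinj : Set.InjOn c L := by
    intro x hx x' hx' hcc
    by_contra hne
    obtain ⟨hrx, hBx⟩ := hL x hx
    obtain ⟨hrx', hBx'⟩ := hL x' hx'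
    obtain ⟨φ, hφ⟩ := swap_is_auto hne hrx hrx'
      (fun y hy => adj_eq_of_B_singleton hrx hBx hy)
      (fun y hy => adj_eq_of_B_singleton hrx' hBx' hy)
    have hpres : ∀ v, c (φ v) = c v := by
      intro v
      rw [show φ v = Equiv.swap x x' v from congrFun hφ v]
      rcases eq_or_ne v x with rfl | hvx
      · rw [Equiv.swap_apply_left]; exact hcc.symm
      rcases eq_or_ne v x' with rfl | hvx'
      · rw [Equiv.swap_apply_right]; exact hcc
      · rw [Equiv.swap_apply_of_ne_of_ne hvx hvx']
    have := hc φ hpres x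
    rw [show φ x = Equiv.swap x x' x from congrFun hφ x, Equiv.swap_apply_left] at this
    exact hne this.symm
  calc L.card ≤ (Finset.univ : Finset (Fin D)).card :=
        Finset.card_le_card_of_injOn c (fun _ _ => Finset.mem_univ _) (by
          intro a ha b hb; exact hinj (by simpa using ha) (by simpa using hb))
    _ = D := by simp

lemma arith_rg {D k : ℕ} (hD : 3 ≤ D) (hk : 2 ≤ k) : D + 1 ≤ (D - 1) * k :=
  calc D + 1 ≤ (D - 1) * 2 := by omega
    _ ≤ (D - 1) * k := Nat.mul_le_mul_left _ hk

lemma arith_leaf {D m : ℕ} (hD : 3 ≤ D) (hm : m ≤ D) :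
    (D + 1) * (m - 1) ≤ (D - 1) + (D - 1) * m := by
  rcases Nat.eq_zero_or_pos m with rfl | hpos
  · simp
  obtain ⟨m', rfl⟩ : ∃ m', m = m' + 1 := ⟨m - 1, by omega⟩
  have h1 : m' + 1 - 1 = m' := by omega
  rw [h1]
  have h2 : (D + 1) * m' = (D - 1) * m' + 2 * m' := by
    have h3 : D + 1 = (D - 1) + 2 := by omega
    rw [h3, Nat.add_mul]
  rw [h2]
  have h4 : (D - 1) * (m' + 1) = (D - 1) * m' + (D - 1) := by ring
  rw [h4]
  have h5 : 2 * m' ≤ (D - 1) + (D - 1) := by omega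
  omega

lemma step (hT : G.IsTree) (hD : 3 ≤ D) (hc : IsDistinguishingColoring G c)
    (r : V) (X : Finset V) (hX : ∀ x ∈ X, G.Adj r x)
    (Sx : V → Finset V)
    (hsub : ∀ x ∈ X, (Sx x : Set V) ⊆ B G r x)
    (hfix : ∀ x ∈ X, ∀ φ : G ≃g G, φ x = x → (∀ v ∈ B G r x, φ v ∈ B G r x) →
        (∀ v ∈ Sx x, φ v = v) → ∀ v ∈ B G r x, φ v = v)
    (hbd : ∀ x ∈ X, (D + 1) * (Sx x).card ≤ (D - 1) * (Bf G r x).card) :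
    ∃ S : Finset V,
      (∀ v ∈ S, ∃ x ∈ X, v ∈ B G r x) ∧
      (∀ φ : G ≃g G, φ r = r → (∀ x ∈ X, φ x ∈ X) → (∀ v ∈ S, φ v = v) →
        ∀ x ∈ X, ∀ v ∈ B G r x, φ v = v) ∧
      (D + 1) * S.card ≤ (D - 1) * (1 + ∑ x ∈ X, (Bf G r x).card) := by
  classical
  set L : Finset V := X.filter (fun x => (Bf G r x).card = 1) with hLdef
  set Rg : Finset V := X.filter (fun x => 2 ≤ (Bf G r x).card ∧ Sx x = ∅) with hRgdef
  -- leaf branches are singletons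
  have hBsing : ∀ x ∈ L, B G r x = {x} := by
    intro x hx
    have hx1 : (Bf G r x).card = 1 := (Finset.mem_filter.1 hx).2
    obtain ⟨y, hy⟩ := Finset.card_eq_one.1 hx1
    have hxy : x ∈ Bf G r x := mem_Bf.2 (mem_B_self r x)
    rw [hy] at hxy
    have hyx : y = x := (Finset.mem_singleton.1 hxy).symm
    rw [hyx] at hy
    ext v
    simp only [Set.mem_singleton_iff]
    constructor
    · intro hv
      have hv2 : v ∈ Bf G r x := mem_Bf.2 hv
      rw [hy] at hv2
      exact Finset.mem_singleton.1 hv2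
    · rintro rfl; exact mem_B_self r _
  -- leaf branches have no fixing-vertices
  have hLempty : ∀ x ∈ L, Sx x = ∅ := by
    intro x hx
    have hxX : x ∈ X := (Finset.mem_filter.1 hx).1
    have hx1 : (Bf G r x).card = 1 := (Finset.mem_filter.1 hx).2
    have := hbd x hxX
    rw [hx1, mul_one] at this
    by_contra hne
    have h1 : 1 ≤ (Sx x).card := Finset.card_pos.2 (Finset.nonempty_iff_ne_empty.2 hne)
    have : D + 1 ≤ D - 1 := le_trans (by nlinarith) this
    omega
  have hcard1 : ∀ x ∈ X, 1 ≤ (Bf G r x).card :=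
    fun x _ => Finset.card_pos.2 ⟨x, mem_Bf.2 (mem_B_self r x)⟩
  have hLD : L.card ≤ D :=
    leaf_card_le hT hc (fun x hx => ⟨hX x (Finset.mem_filter.1 hx).1, hBsing x hx⟩)
  set S0 : Finset V := (X.biUnion Sx) ∪ Rg with hS0def
  -- pointwise budget bound
  set g : V → ℕ := fun x => (D + 1) * (Sx x).card + (if x ∈ Rg then D + 1 else 0) +
      (if x ∈ L then D - 1 else 0) with hgdef
  have hRgL : ∀ x, x ∈ Rg → x ∉ L := by
    intro x hRg hL'
    have h2 := (Finset.mem_filter.1 hRg).2.1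
    have h1 := (Finset.mem_filter.1 hL').2
    omega
  have hgle : ∀ x ∈ X, g x ≤ (D - 1) * (Bf G r x).card := by
    intro x hxX
    by_cases hxL : x ∈ L
    · have hnotRg : x ∉ Rg := fun h => hRgL x h hxL
      have hif : (if x ∈ Rg then D + 1 else 0) = 0 := by simp [hnotRg]
      rw [hgdef]
      simp only [hLempty x hxL, Finset.card_empty, Nat.mul_zero, hif, if_pos hxL,
        Nat.zero_add, (Finset.mem_filter.1 hxL).2, Nat.mul_one]
      exact le_refl _
    by_cases hxRg : x ∈ Rg
    · rw [hgdef]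
      simp only [(Finset.mem_filter.1 hxRg).2.2, Finset.card_empty, Nat.mul_zero,
        if_pos hxRg, if_neg hxL, Nat.zero_add, Nat.add_zero]
      exact arith_rg hD (Finset.mem_filter.1 hxRg).2.1
    · rw [hgdef]
      simp only [if_neg hxRg, if_neg hxL, Nat.add_zero]
      exact hbd x hxX
  have hgsum : ∑ x ∈ X, g x =
      (∑ x ∈ X, (D + 1) * (Sx x).card) + (D + 1) * Rg.card + (D - 1) * L.card := by
    rw [hgdef]
    rw [Finset.sum_add_distrib, Finset.sum_add_distrib]
    congr 1
    · congr 1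
      rw [Finset.sum_ite_mem, Finset.inter_eq_right.2 (Finset.filter_subset _ _),
        Finset.sum_const, smul_eq_mul, Nat.mul_comm]
    · rw [Finset.sum_ite_mem, Finset.inter_eq_right.2 (Finset.filter_subset _ _),
        Finset.sum_const, smul_eq_mul, Nat.mul_comm]
  have hgtot : ∑ x ∈ X, g x ≤ (D - 1) * ∑ x ∈ X, (Bf G r x).card := by
    rw [Finset.mul_sum]
    exact Finset.sum_le_sum hgle
  have hS0card : (D + 1) * S0.card ≤
      (∑ x ∈ X, (D + 1) * (Sx x).card) + (D + 1) * Rg.card := by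
    calc (D + 1) * S0.card ≤ (D + 1) * ((X.biUnion Sx).card + Rg.card) :=
          Nat.mul_le_mul_left _ (Finset.card_union_le _ _)
      _ = (D + 1) * (X.biUnion Sx).card + (D + 1) * Rg.card := by ring
      _ ≤ (D + 1) * (∑ x ∈ X, (Sx x).card) + (D + 1) * Rg.card := by
          exact Nat.add_le_add_right
            (Nat.mul_le_mul_left _ (Finset.card_biUnion_le)) _
      _ = (∑ x ∈ X, (D + 1) * (Sx x).card) + (D + 1) * Rg.card := by
          rw [Finset.mul_sum]
  -- the fixing part, common to both cases
  have hfixmain : ∀ (E : Finset V), E ⊆ L →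
      (∀ φ : G ≃g G, φ r = r → (∀ x ∈ X, φ x ∈ X) → (∀ v ∈ S0 ∪ E, φ v = v) →
        ∀ x ∈ L, φ x = x) →
      (∀ φ : G ≃g G, φ r = r → (∀ x ∈ X, φ x ∈ X) → (∀ v ∈ S0 ∪ E, φ v = v) →
        ∀ x ∈ X, ∀ v ∈ B G r x, φ v = v) := by
    intro E hEL hLfix φ hr hXX hS
    have hall : ∀ x ∈ X, φ x = x := by
      intro x hxX
      by_cases hxL : x ∈ L
      · exact hLfix φ hr hXX hS x hxL
      by_cases hxSx : Sx x = ∅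
      · -- then x ∈ Rg
        have h2 : 2 ≤ (Bf G r x).card := by
          have := hcard1 x hxX
          have hne1 : (Bf G r x).card ≠ 1 := by
            intro e; exact hxL (Finset.mem_filter.2 ⟨hxX, e⟩)
          omega
        have hxRg : x ∈ Rg := Finset.mem_filter.2 ⟨hxX, h2, hxSx⟩
        exact hS x (Finset.mem_union_left _ (Finset.mem_union_right _ hxRg))
      · -- Sx x nonempty
        obtain ⟨s, hs⟩ := Finset.nonempty_iff_ne_empty.2 hxSx
        have hsS : s ∈ S0 ∪ E := Finset.mem_union_left _
          (Finset.mem_union_left _ (Finset.mem_biUnion.2 ⟨x, hxX, hs⟩))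
        have hsfix : φ s = s := hS s hsS
        have hsB : s ∈ B G r x := hsub x hxX hs
        have hsB2 : φ s ∈ B G (φ r) (φ x) := mem_B_map φ hsB
        rw [hr, hsfix] at hsB2
        by_contra hne
        have hd := branch_disjoint hT (hX x hxX) (hX (φ x) (hXX x hxX))
          (fun e => hne e.symm)
        exact absurd (Set.mem_inter hsB hsB2) (by rw [hd]; exact Set.notMem_empty s)
    intro x hxX v hv
    refine hfix x hxX φ (hall x hxX) ?_ ?_ v hv
    · intro w hw
      have := mem_B_map φ hw
      rwa [hr, hall x hxX] at this
    · intro w hw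
      exact hS w (Finset.mem_union_left _ (Finset.mem_union_left _
        (Finset.mem_biUnion.2 ⟨x, hxX, hw⟩)))
  have hmemmain : ∀ v ∈ S0, ∃ x ∈ X, v ∈ B G r x := by
    intro v hv
    rcases Finset.mem_union.1 hv with hv | hv
    · obtain ⟨x, hxX, hvx⟩ := Finset.mem_biUnion.1 hv
      exact ⟨x, hxX, hsub x hxX hvx⟩
    · exact ⟨v, (Finset.mem_filter.1 hv).1, mem_B_self r v⟩
  by_cases hLne : L.Nonempty
  case neg =>
    have hLe : L = ∅ := Finset.not_nonempty_iff_eq_empty.1 hLne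
    refine ⟨S0, hmemmain, ?_, ?_⟩
    · have := hfixmain ∅ (by simp) (by intro φ _ _ _ x hx; rw [hLe] at hx; simp at hx)
      intro φ hr hXX hS
      exact this φ hr hXX (by simpa using hS)
    · calc (D + 1) * S0.card
          ≤ (∑ x ∈ X, (D + 1) * (Sx x).card) + (D + 1) * Rg.card := hS0card
        _ ≤ ∑ x ∈ X, g x := by rw [hgsum]; omega
        _ ≤ (D - 1) * ∑ x ∈ X, (Bf G r x).card := hgtot
        _ ≤ (D - 1) * (1 + ∑ x ∈ X, (Bf G r x).card) := by
            exact Nat.mul_le_mul_left _ (by omega)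
  case pos =>
    obtain ⟨x₀, hx₀⟩ := hLne
    refine ⟨S0 ∪ L.erase x₀, ?_, ?_, ?_⟩
    · intro v hv
      rcases Finset.mem_union.1 hv with hv | hv
      · exact hmemmain v hv
      · have hvL := Finset.mem_of_mem_erase hv
        exact ⟨v, (Finset.mem_filter.1 hvL).1, mem_B_self r v⟩
    · refine hfixmain (L.erase x₀) (Finset.erase_subset _ _) ?_
      intro φ hr hXX hS x hxL
      by_cases hxe : x = x₀
      · subst hxe
        -- φ x is again a leaf child
        have hφx : φ x ∈ L := by
          have hca : (Bf G r (φ x)).card = (Bf G r x).card := by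
            have := Bf_card_map φ r x
            rwa [hr] at this
          refine Finset.mem_filter.2 ⟨hXX x (Finset.mem_filter.1 hxL).1, ?_⟩
          rw [hca]
          exact (Finset.mem_filter.1 hxL).2
        by_contra hne
        have hmem : φ x ∈ L.erase x := Finset.mem_erase.2 ⟨fun e => hne e, hφx⟩
        have : φ (φ x) = φ x := hS (φ x) (Finset.mem_union_right _ hmem)
        exact hne (φ.injective this)
      · exact hS x (Finset.mem_union_right _ (Finset.mem_erase.2 ⟨hxe, hxL⟩))
    · have hcardE : (L.erase x₀).card = L.card - 1 := Finset.card_erase_of_mem hx₀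
      calc (D + 1) * (S0 ∪ L.erase x₀).card
          ≤ (D + 1) * (S0.card + (L.card - 1)) := by
            rw [← hcardE]
            exact Nat.mul_le_mul_left _ (Finset.card_union_le _ _)
        _ = (D + 1) * S0.card + (D + 1) * (L.card - 1) := by ring
        _ ≤ ((∑ x ∈ X, (D + 1) * (Sx x).card) + (D + 1) * Rg.card)
              + ((D - 1) + (D - 1) * L.card) := by
            exact Nat.add_le_add hS0card (arith_leaf hD hLD)
        _ = (∑ x ∈ X, g x) + (D - 1) := by rw [hgsum]; ring
        _ ≤ ((D - 1) * ∑ x ∈ X, (Bf G r x).card) + (D - 1) := by omega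
        _ = (D - 1) * (1 + ∑ x ∈ X, (Bf G r x).card) := by ring


lemma branches (hT : G.IsTree) (hD : 3 ≤ D) (hc : IsDistinguishingColoring G c) :
    ∀ (k : ℕ) (p r : V), G.Adj p r → (Bf G p r).card ≤ k →
    ∃ S : Finset V, (S : Set V) ⊆ B G p r ∧
      (∀ φ : G ≃g G, φ r = r → (∀ v ∈ B G p r, φ v ∈ B G p r) → (∀ v ∈ S, φ v = v) →
        ∀ v ∈ B G p r, φ v = v) ∧
      (D + 1) * S.card ≤ (D - 1) * (Bf G p r).card := by
  intro k
  induction k with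
  | zero =>
    intro p r hpr h0
    exact absurd h0 (by
      simp only [not_le]
      exact Finset.card_pos.2 ⟨r, mem_Bf.2 (mem_B_self p r)⟩)
  | succ k ih =>
    intro p r hpr hk
    classical
    set X : Finset V := Finset.univ.filter (fun x => G.Adj r x ∧ x ≠ p) with hXdef
    have hmemX : ∀ x, x ∈ X ↔ (G.Adj r x ∧ x ≠ p) := by
      intro x; simp [hXdef]
    have hX : ∀ x ∈ X, G.Adj r x := fun x hx => ((hmemX x).1 hx).1
    have hXp : ∀ x ∈ X, x ≠ p := fun x hx => ((hmemX x).1 hx).2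
    have hsubB : ∀ x ∈ X, B G r x ⊆ B G p r :=
      fun x hx => branch_subset hT hpr (hX x hx) (hXp x hx)
    have hcov : ∀ v ∈ B G p r, v ≠ r → ∃ x ∈ X, v ∈ B G r x := by
      intro v hv hvr
      obtain ⟨u, hu, hmem⟩ := exists_branch hT hvr
      refine ⟨u, (hmemX u).2 ⟨hu, ?_⟩, hmem⟩
      intro e
      subst e
      have hdisj := pair_disjoint hT hpr
      exact absurd (Set.mem_inter hv hmem) (by
        rw [hdisj]; exact Set.notMem_empty v)
    have hxB : ∀ x ∈ X, x ∈ B G p r := by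
      intro x hx
      exact Adj.reachable ⟨hX x hx, hpr.ne', hXp x hx⟩
    have hex : ∀ x ∈ X, ∃ Sx : Finset V, (Sx : Set V) ⊆ B G r x ∧
        (∀ φ : G ≃g G, φ x = x → (∀ v ∈ B G r x, φ v ∈ B G r x) → (∀ v ∈ Sx, φ v = v) →
          ∀ v ∈ B G r x, φ v = v) ∧
        (D + 1) * Sx.card ≤ (D - 1) * (Bf G r x).card := by
      intro x hx
      refine ih r x (hX x hx) ?_
      have hss : Bf G r x ⊆ (Bf G p r).erase r := by
        intro v hv
        refine Finset.mem_erase.2 ⟨ne_of_mem_B (hX x hx).ne' (mem_Bf.1 hv), ?_⟩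
        exact mem_Bf.2 (hsubB x hx (mem_Bf.1 hv))
      calc (Bf G r x).card ≤ ((Bf G p r).erase r).card := Finset.card_le_card hss
        _ = (Bf G p r).card - 1 :=
            Finset.card_erase_of_mem (mem_Bf.2 (mem_B_self p r))
        _ ≤ k := by omega
    choose! Sx hSx1 hSx2 hSx3 using hex
    obtain ⟨S, hSmem, hSfix, hScard⟩ := step hT hD hc r X hX Sx hSx1 hSx2 hSx3
    have hpart : (Bf G p r).card = 1 + ∑ x ∈ X, (Bf G r x).card := by
      refine card_partition hT hX (mem_Bf.2 (mem_B_self p r)) ?_ ?_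
      · intro v hv hvr
        exact hcov v (mem_Bf.1 hv) hvr
      · intro x hx v hv
        exact mem_Bf.2 (hsubB x hx hv)
    refine ⟨S, ?_, ?_, ?_⟩
    · intro v hv
      obtain ⟨x, hx, hvx⟩ := hSmem v hv
      exact hsubB x hx hvx
    · intro φ hr hmaps hfS
      have hXX : ∀ x ∈ X, φ x ∈ X := by
        intro x hx
        refine (hmemX (φ x)).2 ⟨?_, ?_⟩
        · have h1 : G.Adj (φ r) (φ x) := φ.map_rel_iff.2 (hX x hx)
          rwa [hr] at h1
        · intro e
          have hmem := hmaps x (hxB x hx)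
          rw [e] at hmem
          exact not_mem_B hpr.ne' hmem
      have hmain := hSfix φ hr hXX hfS
      intro v hv
      rcases eq_or_ne v r with rfl | hvr
      · exact hr
      · obtain ⟨x, hx, hvx⟩ := hcov v hv hvr
        exact hmain x hx v hvx
    · rw [hpart]
      exact hScard

end Step

section Centroid

variable (G) [Fintype V] [DecidableEq V]

/-- The weight of a vertex: the largest branch size at it. -/
noncomputable def wt (v : V) : ℕ := (Finset.univ.erase v).sup (fun x => (Bf G v x).card)

variable {G}

lemma wt_map (φ : G ≃g G) (v : V) : wt G (φ v) = wt G v := by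
  have himg : (Finset.univ.erase v).image φ = Finset.univ.erase (φ v) := by
    ext y
    simp only [Finset.mem_image, Finset.mem_erase, Finset.mem_univ, and_true]
    constructor
    · rintro ⟨z, hz, rfl⟩
      exact fun e => hz (φ.injective e)
    · intro hy
      exact ⟨φ.symm y, fun e => hy (by rw [← e]; simp), by simp⟩
  rw [wt, ← himg, Finset.sup_image]
  apply Finset.sup_congr rfl
  intro x hx
  exact Bf_card_map φ v x

lemma card_pair (hT : G.IsTree) {a b : V} (hab : G.Adj a b) :
    (Bf G a b).card + (Bf G b a).card = Fintype.card V := by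
  classical
  have hunion : Bf G a b ∪ Bf G b a = Finset.univ := by
    ext v
    simp only [Finset.mem_union, mem_Bf, Finset.mem_univ, iff_true]
    exact pair_cover hT hab.ne v
  have hdisj : Disjoint (Bf G a b) (Bf G b a) := by
    rw [Finset.disjoint_left]
    intro v hv hv'
    have := pair_disjoint hT hab
    exact absurd (Set.mem_inter (mem_Bf.1 hv) (mem_Bf.1 hv')) (by
      rw [this]; exact Set.notMem_empty v)
  rw [← Finset.card_union_of_disjoint hdisj, hunion, Finset.card_univ]

/-- At a minimizer of `wt`, every branch has at most half the vertices. -/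
lemma half_of_min (hT : G.IsTree) {v : V} (hmin : ∀ y, wt G v ≤ wt G y)
    {x : V} (hx : x ≠ v) : 2 * (Bf G v x).card ≤ Fintype.card V := by
  classical
  by_contra hbig
  push_neg at hbig
  obtain ⟨u, hu, hmem⟩ := exists_branch hT hx
  have hBeq : B G v x = B G v u := B_eq_of_mem hmem
  have hBfeq : Bf G v x = Bf G v u := by
    ext w; simp only [mem_Bf, hBeq]
  rw [hBfeq] at hbig
  set n := Fintype.card V with hn
  set C := Bf G v u with hC
  have hCle : C.card ≤ n := by
    rw [hn]; exact Finset.card_le_univ _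
  have hwv : C.card ≤ wt G v := by
    have h := Finset.le_sup (f := fun x => (Bf G v x).card)
      (Finset.mem_erase.2 ⟨hu.ne', Finset.mem_univ u⟩)
    exact h
  have hpair : (Bf G u v).card + C.card = n := card_pair hT hu.symm
  -- every branch at u is small
  have hsmall : ∀ y, y ≠ u → (Bf G u y).card ≤ C.card - 1 := by
    intro y hy
    by_cases hyv : y ∈ B G u v
    · have : Bf G u y = Bf G u v := by
        ext w
        simp only [mem_Bf, B_eq_of_mem hyv]
      rw [this]
      omega
    · have hyC : y ∈ B G v u := (pair_cover hT hu.ne.symm y).resolve_left hyv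
      have hsub : Bf G u y ⊆ C.erase u := by
        intro z hz
        have hzy : z ∈ B G u y := mem_Bf.1 hz
        have hzv : z ∉ B G u v := by
          intro hzv
          have h1 : B G u z = B G u y := B_eq_of_mem hzy
          have h2 : B G u z = B G u v := B_eq_of_mem hzv
          exact hyv (by rw [← h2, h1]; exact mem_B_self u y)
        have hzC : z ∈ B G v u := (pair_cover hT hu.ne.symm z).resolve_left hzv
        refine Finset.mem_erase.2 ⟨ne_of_mem_B hy hzy, mem_Bf.2 hzC⟩
      calc (Bf G u y).card ≤ (C.erase u).card := Finset.card_le_card hsub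
        _ = C.card - 1 := Finset.card_erase_of_mem (by
            rw [hC]; exact mem_Bf.2 (mem_B_self v u))
  have hwu : wt G u ≤ C.card - 1 := by
    refine Finset.sup_le ?_
    intro y hy
    exact hsmall y (Finset.mem_erase.1 hy).1
  have hwu' : wt G v ≤ wt G u := hmin u
  have h1 : 1 ≤ C.card := Finset.card_pos.2 ⟨u, by rw [hC]; exact mem_Bf.2 (mem_B_self v u)⟩
  have := hmin u
  omega

lemma adj_of_two_min (hT : G.IsTree) {a b : V}
    (hmina : ∀ y, wt G a ≤ wt G y) (hminb : ∀ y, wt G b ≤ wt G y)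
    (hab : a ≠ b) : G.Adj a b := by
  classical
  by_contra hnadj
  obtain ⟨m, hm1, hm2⟩ := pair_overlap hT hab hnadj
  have hcov : Bf G a b ∪ Bf G b a = Finset.univ := by
    ext v
    simp only [Finset.mem_union, mem_Bf, Finset.mem_univ, iff_true]
    exact pair_cover hT hab v
  have hint : 1 ≤ (Bf G a b ∩ Bf G b a).card :=
    Finset.card_pos.2 ⟨m, Finset.mem_inter.2 ⟨mem_Bf.2 hm1, mem_Bf.2 hm2⟩⟩
  have hcards := Finset.card_union_add_card_inter (Bf G a b) (Bf G b a)
  rw [hcov, Finset.card_univ] at hcards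
  have h1 : 2 * (Bf G a b).card ≤ Fintype.card V := half_of_min hT hmina hab.symm
  have h2 : 2 * (Bf G b a).card ≤ Fintype.card V := half_of_min hT hminb hab
  omega

end Centroid

section Main

variable [Fintype V] [DecidableEq V] {D : ℕ} {c : V → Fin D}

lemma main_exists (hT : G.IsTree) (hD : 3 ≤ D) (hc : IsDistinguishingColoring G c) :
    ∃ S : Finset V, IsFixingSet G ↑S ∧
      (D + 1) * S.card ≤ (D - 1) * Fintype.card V := by
  classical
  have hne : (Finset.univ : Finset V).Nonempty := by
    have := hT.isConnected.nonempty
    exact Finset.univ_nonempty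
  obtain ⟨a, -, hmina'⟩ := Finset.exists_min_image Finset.univ (wt G) hne
  have hmina : ∀ y, wt G a ≤ wt G y := fun y => hmina' y (Finset.mem_univ y)
  have hminφ : ∀ (φ : G ≃g G) (m : V), (∀ y, wt G m ≤ wt G y) →
      (∀ y, wt G (φ m) ≤ wt G y) := by
    intro φ m hm y
    rw [wt_map]
    calc wt G m ≤ wt G (φ.symm y) := hm _
      _ = wt G (φ (φ.symm y)) := (wt_map φ _).symm
      _ = wt G y := by simp
  by_cases hsing : ∀ b, (∀ y, wt G b ≤ wt G y) → b = a
  · -- unique centroid: every automorphism fixes `a`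
    have hfixa : ∀ φ : G ≃g G, φ a = a := fun φ => hsing _ (hminφ φ a hmina)
    set X : Finset V := Finset.univ.filter (fun x => G.Adj a x) with hXdef
    have hX : ∀ x ∈ X, G.Adj a x := by
      intro x hx; exact (Finset.mem_filter.1 hx).2
    have hex : ∀ x ∈ X, ∃ Sx : Finset V, (Sx : Set V) ⊆ B G a x ∧
        (∀ φ : G ≃g G, φ x = x → (∀ v ∈ B G a x, φ v ∈ B G a x) → (∀ v ∈ Sx, φ v = v) →
          ∀ v ∈ B G a x, φ v = v) ∧
        (D + 1) * Sx.card ≤ (D - 1) * (Bf G a x).card :=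
      fun x hx => branches hT hD hc (Bf G a x).card a x (hX x hx) le_rfl
    choose! Sx hSx1 hSx2 hSx3 using hex
    obtain ⟨S, hSmem, hSfix, hScard⟩ := step hT hD hc a X hX Sx hSx1 hSx2 hSx3
    have hcovV : ∀ v : V, v ≠ a → ∃ x ∈ X, v ∈ B G a x := by
      intro v hv
      obtain ⟨u, hu, hmem⟩ := exists_branch hT hv
      exact ⟨u, Finset.mem_filter.2 ⟨Finset.mem_univ u, hu⟩, hmem⟩
    refine ⟨S, ?_, ?_⟩
    · intro φ hS v
      have hXX : ∀ x ∈ X, φ x ∈ X := by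
        intro x hx
        refine Finset.mem_filter.2 ⟨Finset.mem_univ _, ?_⟩
        have h1 : G.Adj (φ a) (φ x) := φ.map_rel_iff.2 (hX x hx)
        rwa [hfixa φ] at h1
      have hmain := hSfix φ (hfixa φ) hXX (fun w hw => hS w hw)
      rcases eq_or_ne v a with rfl | hva
      · exact hfixa φ
      · obtain ⟨x, hx, hvx⟩ := hcovV v hva
        exact hmain x hx v hvx
    · have hpart : Fintype.card V = 1 + ∑ x ∈ X, (Bf G a x).card := by
        rw [← Finset.card_univ]
        refine card_partition hT hX (Finset.mem_univ a) ?_ ?_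
        · intro v _ hvr; exact hcovV v hvr
        · intro x _ v _; exact Finset.mem_univ v
      rw [hpart]
      exact hScard
  · -- two adjacent centroids `a`, `b`
    push_neg at hsing
    obtain ⟨b, hminb, hba⟩ := hsing
    have hadj : G.Adj a b := adj_of_two_min hT hmina hminb (fun e => hba e.symm)
    have hM : ∀ m, (∀ y, wt G m ≤ wt G y) → m = a ∨ m = b := by
      intro m hm
      by_contra hmab
      push_neg at hmab
      have hma : G.Adj m a := adj_of_two_min hT hm hmina hmab.1
      have hmb : G.Adj m b := adj_of_two_min hT hm hminb hmab.2
      have hp1 : (Walk.cons hadj Walk.nil : G.Walk a b).IsPath := by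
        simp [Walk.isPath_def, hadj.ne]
      have hp2 : (Walk.cons hma.symm (Walk.cons hmb Walk.nil) : G.Walk a b).IsPath := by
        simp only [Walk.isPath_def, Walk.support_cons, Walk.support_nil,
          List.nodup_cons, List.mem_cons, List.mem_singleton, List.not_mem_nil,
          not_false_iff, List.nodup_nil, and_true]
        refine ⟨?_, ?_⟩
        · push_neg
          exact ⟨fun e => hma.ne e.symm, fun e => hadj.ne e, trivial⟩
        · rintro (e | e)
          · exact hmb.ne e
          · exact e
      have := (hT.existsUnique_path a b).unique hp1 hp2
      have hlen := congrArg Walk.length this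
      simp [Walk.length_cons] at hlen
    obtain ⟨SA, hSA1, hSA2, hSA3⟩ :=
      branches hT hD hc (Bf G b a).card b a hadj.symm le_rfl
    obtain ⟨SB, hSB1, hSB2, hSB3⟩ :=
      branches hT hD hc (Bf G a b).card a b hadj le_rfl
    set extra : Finset V := if SA = ∅ ∧ SB = ∅ then {a} else ∅ with hextradef
    refine ⟨SA ∪ SB ∪ extra, ?_, ?_⟩
    · intro φ hS
      have hfa : φ a = a := by
        rcases hM (φ a) (hminφ φ a hmina) with h | h
        · exact h
        · exfalso
          have hfb : φ b = a := by
            rcases hM (φ b) (hminφ φ b hminb) with h' | h'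
            · exact h'
            · exact absurd (φ.injective (h.trans h'.symm)) (fun e => hba e.symm)
          by_cases hSAe : SA = ∅
          · by_cases hSBe : SB = ∅
            · have haS : a ∈ SA ∪ SB ∪ extra := by
                rw [hextradef, if_pos ⟨hSAe, hSBe⟩]
                simp
              have := hS a haS
              rw [h] at this
              exact hadj.ne this.symm
            · obtain ⟨s, hs⟩ := Finset.nonempty_iff_ne_empty.2 hSBe
              have hfs : φ s = s := hS s (Finset.mem_union_left _
                (Finset.mem_union_right _ hs))
              have hsB : s ∈ B G a b := hSB1 hs
              have h2 : φ s ∈ B G (φ a) (φ b) := mem_B_map φ hsB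
              rw [h, hfb, hfs] at h2
              have := pair_disjoint hT hadj
              exact absurd (Set.mem_inter hsB h2) (by rw [this]; exact Set.notMem_empty s)
          · obtain ⟨s, hs⟩ := Finset.nonempty_iff_ne_empty.2 hSAe
            have hfs : φ s = s := hS s (Finset.mem_union_left _
              (Finset.mem_union_left _ hs))
            have hsB : s ∈ B G b a := hSA1 hs
            have h2 : φ s ∈ B G (φ b) (φ a) := mem_B_map φ hsB
            rw [h, hfb, hfs] at h2
            have := pair_disjoint hT hadj
            exact absurd (Set.mem_inter h2 hsB) (by rw [this]; exact Set.notMem_empty s)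
      have hfb : φ b = b := by
        rcases hM (φ b) (hminφ φ b hminb) with h' | h'
        · exact absurd (φ.injective (hfa.trans h'.symm).symm) (fun e => hba e)
        · exact h'
      have hidA : ∀ v ∈ B G b a, φ v = v := by
        refine hSA2 φ hfa ?_ ?_
        · intro v hv
          have h2 := mem_B_map φ hv
          rwa [hfa, hfb] at h2
        · intro v hv
          exact hS v (Finset.mem_union_left _ (Finset.mem_union_left _ hv))
      have hidB : ∀ v ∈ B G a b, φ v = v := by
        refine hSB2 φ hfb ?_ ?_
        · intro v hv
          have h2 := mem_B_map φ hv
          rwa [hfa, hfb] at h2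
        · intro v hv
          exact hS v (Finset.mem_union_left _ (Finset.mem_union_right _ hv))
      intro v
      rcases pair_cover hT hadj.ne v with hv | hv
      · exact hidB v hv
      · exact hidA v hv
    · have hn := card_pair hT hadj
      by_cases hSe : SA = ∅ ∧ SB = ∅
      · have hextra : extra = {a} := by rw [hextradef, if_pos hSe]
        have hcard : (SA ∪ SB ∪ extra).card ≤ 1 := by
          rw [hSe.1, hSe.2, hextra]
          simp
        have h2n : 2 ≤ Fintype.card V := by
          have : Nontrivial V := ⟨⟨a, b, hadj.ne⟩⟩
          exact Fintype.one_lt_card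
        calc (D + 1) * (SA ∪ SB ∪ extra).card ≤ (D + 1) * 1 :=
              Nat.mul_le_mul_left _ hcard
          _ = D + 1 := by ring
          _ ≤ (D - 1) * Fintype.card V := arith_rg hD h2n
      · have hextra : extra = ∅ := by rw [hextradef, if_neg hSe]
        calc (D + 1) * (SA ∪ SB ∪ extra).card
            ≤ (D + 1) * (SA.card + SB.card) := by
              refine Nat.mul_le_mul_left _ ?_
              rw [hextra]
              calc (SA ∪ SB ∪ (∅ : Finset V)).card = (SA ∪ SB).card := by
                    rw [Finset.union_empty]
                _ ≤ SA.card + SB.card := Finset.card_union_le _ _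
          _ = (D + 1) * SA.card + (D + 1) * SB.card := by ring
          _ ≤ (D - 1) * (Bf G b a).card + (D - 1) * (Bf G a b).card :=
              Nat.add_le_add hSA3 hSB3
          _ = (D - 1) * ((Bf G a b).card + (Bf G b a).card) := by ring
          _ = (D - 1) * Fintype.card V := by rw [hn]

end Main
end TreeFix

theorem tree_fixing_density_le_of_distinguishingNumber
    {V : Type*} [Fintype V] (G : SimpleGraph V)
    (hT : G.IsTree) (D : ℕ) (hD3 : 3 ≤ D)
    (hD : distinguishingNumber G = D) :
    (fixingNumber G : ℚ) ≤ ((D : ℚ) - 1) / ((D : ℚ) + 1) * Fintype.card V := by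
  classical
  have hne : {D' | Distinguishable G D'}.Nonempty := by
    by_contra h
    rw [Set.not_nonempty_iff_eq_empty] at h
    rw [distinguishingNumber, h, Nat.sInf_empty] at hD
    omega
  have hmem : Distinguishable G D := by
    have h := Nat.sInf_mem hne
    rwa [← distinguishingNumber, hD] at h
  obtain ⟨c, hc⟩ := hmem
  obtain ⟨S, hfix, hcard⟩ := TreeFix.main_exists hT hD3 hc
  have hF : fixingNumber G ≤ S.card := Nat.sInf_le ⟨S, rfl, hfix⟩
  have h1 : (D + 1) * fixingNumber G ≤ (D - 1) * Fintype.card V :=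
    le_trans (Nat.mul_le_mul_left _ hF) hcard
  have h2 : (((D + 1) * fixingNumber G : ℕ) : ℚ) ≤ (((D - 1) * Fintype.card V : ℕ) : ℚ) :=
    Nat.cast_le.2 h1
  rw [Nat.cast_mul, Nat.cast_mul, Nat.cast_add, Nat.cast_one,
    Nat.cast_sub (by omega : 1 ≤ D), Nat.cast_one] at h2
  rw [div_mul_eq_mul_div, le_div_iff₀ (by positivity : (0:ℚ) < (D:ℚ) + 1)]
  linarith [h2]
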